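/- arXiv:2203.00855 — 3 statements merged into one kernel-verified Lean document; each statement's English description precedes it below -/
import Mathlib

section
/- Stretching Lemma, part (1): Let σ be a turn sequence with at least one turn. If a point p = (a,b) with a ≠ 0 and b ≠ 0 is reachable by σ (i.e., p ∈ A(σ)), then the entire quadrant Q⁺(p) is contained in A(σ). -/
/-- A turn: left (`L`) or right (`R`). -/
inductive Turn : Type
  | L : Turn
  | R : Turn
  deriving DecidableEq

/-- Rotation of a direction vector by 90° counterclockwise. -/
def rotCCW (d : ℤ × ℤ) : ℤ × ℤ := (-d.2, d.1)

/-- Rotation of a direction vector by 90° clockwise. -/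
def rotCW (d : ℤ × ℤ) : ℤ × ℤ := (d.2, -d.1)

/-- Unit direction of the axis-parallel segment from `u` to `v`. -/
def unitDir (u v : ℤ × ℤ) : ℤ × ℤ := ((v.1 - u.1).sign, (v.2 - u.2).sign)

/-- The set of integer points on the axis-parallel closed segment from `u` to `v`. -/
def segSet (u v : ℤ × ℤ) : Set (ℤ × ℤ) :=
  {q | min u.1 v.1 ≤ q.1 ∧ q.1 ≤ max u.1 v.1 ∧ min u.2 v.2 ≤ q.2 ∧ q.2 ≤ max u.2 v.2}

/-- A simple rectilinear chain realizing the turn sequence `σ = σ₁⋯σₙ` (as a list,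
`σ.get ⟨i, _⟩` is the `(i+1)`-st turn `σ_{i+1}`).  It consists of the points
`pts 0, …, pts (n+1)` with `pts 0 = (0,0)`; consecutive points span nondegenerate
axis-parallel segments, the first segment heads east, the chain turns left (CCW) or
right (CW) at each bend as prescribed by `σ`, and the chain is simple. -/
structure Chain (σ : List Turn) where
  pts : ℕ → ℤ × ℤ
  start_eq : pts 0 = (0, 0)
  first_seg : ∃ t : ℤ, 0 < t ∧ pts 1 = (t, 0)
  axis_parallel : ∀ i ≤ σ.length,
    ((pts (i + 1)).1 = (pts i).1 ∧ (pts (i + 1)).2 ≠ (pts i).2) ∨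
    ((pts (i + 1)).2 = (pts i).2 ∧ (pts (i + 1)).1 ≠ (pts i).1)
  turns : ∀ i, ∀ h : i < σ.length,
    unitDir (pts (i + 1)) (pts (i + 2)) =
      (if σ.get ⟨i, h⟩ = Turn.L then rotCCW else rotCW) (unitDir (pts i) (pts (i + 1)))
  simple_adj : ∀ i, i + 1 ≤ σ.length →
    segSet (pts i) (pts (i + 1)) ∩ segSet (pts (i + 1)) (pts (i + 2)) = {pts (i + 1)}
  simple_nonadj : ∀ i j, i + 1 < j → j ≤ σ.length →
    segSet (pts i) (pts (i + 1)) ∩ segSet (pts j) (pts (j + 1)) = ∅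

/-- `A(σ)`: the set of points reachable by the turn sequence `σ`. -/
def ReachSet (σ : List Turn) : Set (ℤ × ℤ) :=
  {q | ∃ C : Chain σ, C.pts (σ.length + 1) = q}

/-- The halfplane `V⁺(p)` (requires `p.1 ≠ 0` to be meaningful). -/
def Vplus (p : ℤ × ℤ) : Set (ℤ × ℤ) :=
  {q | ∃ i j : ℤ, 0 ≤ i ∧ q = (p.1 + p.1.sign * i, j)}

/-- The halfplane `H⁺(p)` (requires `p.2 ≠ 0` to be meaningful). -/
def Hplus (p : ℤ × ℤ) : Set (ℤ × ℤ) :=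
  {q | ∃ i j : ℤ, 0 ≤ j ∧ q = (i, p.2 + p.2.sign * j)}

/-- The quadrant `Q⁺(p)`. -/
def Qplus (p : ℤ × ℤ) : Set (ℤ × ℤ) := Vplus p ∩ Hplus p

/-- A staircase: consecutive turns always differ. -/
def IsStaircase (σ : List Turn) : Prop := σ.Chain' (· ≠ ·)

/-- The prefix number `δᵢ`: number of `L`s minus number of `R`s among the first `i` turns. -/
def delta (σ : List Turn) (i : ℕ) : ℤ :=
  ((σ.take i).count Turn.L : ℤ) - ((σ.take i).count Turn.R : ℤ)

/-- The excess number `l - r` of a turn sequence. -/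
def excess (σ : List Turn) : ℤ := (σ.count Turn.L : ℤ) - (σ.count Turn.R : ℤ)

/-- `σ` has a hook (two equal consecutive turns, at 1-based positions `k+1, k+2`)
whose prefix number is `≡ d (mod 4)`: `d = 0, 1, 2, 3` for right, up, left, down hooks. -/
def HasHook (σ : List Turn) (d : ℤ) : Prop :=
  ∃ k, ∃ h : k + 1 < σ.length,
    σ.get ⟨k, by omega⟩ = σ.get ⟨k + 1, h⟩ ∧ delta σ (k + 1) % 4 = d

/-- `σ` has some hook, i.e. two equal consecutive turns. -/
def HasAnyHook (σ : List Turn) : Prop :=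
  ∃ k, ∃ h : k + 1 < σ.length, σ.get ⟨k, by omega⟩ = σ.get ⟨k + 1, h⟩

/-- A set `S ⊆ ℤ²` is connected: any two points of `S` are joined by a path inside `S`
whose consecutive points are at `L¹`-distance `1`. -/
def GridConnected (S : Set (ℤ × ℤ)) : Prop :=
  ∀ p ∈ S, ∀ q ∈ S, ∃ (n : ℕ) (f : ℕ → ℤ × ℤ),
    f 0 = p ∧ f n = q ∧ (∀ i ≤ n, f i ∈ S) ∧
    ∀ i < n, |(f (i + 1)).1 - (f i).1| + |(f (i + 1)).2 - (f i).2| = 1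

/-- `q` lies on the boundary of the smallest axis-parallel bounding box of the chain `C`
(for `q` a point of the chain: it attains an extreme coordinate). -/
def OnBBoxBoundary (σ : List Turn) (C : Chain σ) (q : ℤ × ℤ) : Prop :=
  (∀ i ≤ σ.length + 1, q.1 ≤ (C.pts i).1) ∨ (∀ i ≤ σ.length + 1, (C.pts i).1 ≤ q.1) ∨
  (∀ i ≤ σ.length + 1, q.2 ≤ (C.pts i).2) ∨ (∀ i ≤ σ.length + 1, (C.pts i).2 ≤ q.2)

/-- The last segment of the chain `C` is entirely contained in one side of the smallest
axis-parallel bounding box of `C`. -/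
def LastSegOnSide (σ : List Turn) (C : Chain σ) : Prop :=
  ((C.pts σ.length).1 = (C.pts (σ.length + 1)).1 ∧
     ∀ i ≤ σ.length + 1, (C.pts σ.length).1 ≤ (C.pts i).1) ∨
  ((C.pts σ.length).1 = (C.pts (σ.length + 1)).1 ∧
     ∀ i ≤ σ.length + 1, (C.pts i).1 ≤ (C.pts σ.length).1) ∨
  ((C.pts σ.length).2 = (C.pts (σ.length + 1)).2 ∧
     ∀ i ≤ σ.length + 1, (C.pts σ.length).2 ≤ (C.pts i).2) ∨
  ((C.pts σ.length).2 = (C.pts (σ.length + 1)).2 ∧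
     ∀ i ≤ σ.length + 1, (C.pts i).2 ≤ (C.pts σ.length).2)

/-- The turn `σₘ` (1-based indexing). -/
def turnAt (σ : List Turn) (m : ℕ) : Turn := σ.getD (m - 1) Turn.L

/-- The suffix `σ_k ⋯ σ_n` contains no hook and all its prefix numbers `δᵢ`,
`k - 1 ≤ i ≤ n`, are `≡ 1` or `2 (mod 4)` (the combinatorial description of a
NW-staircase containing the endpoint). -/
def GoodSuffix (σ : List Turn) (k : ℕ) : Prop :=
  1 ≤ k ∧ k ≤ σ.length ∧
  (∀ m : ℕ, k ≤ m → m < σ.length → turnAt σ m ≠ turnAt σ (m + 1)) ∧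
  (∀ i : ℕ, k - 1 ≤ i → i ≤ σ.length → delta σ i % 4 = 1 ∨ delta σ i % 4 = 2)

open Classical in
/-- `₋ₓm₊ᵧᵖ(σ)`: taking the longest good suffix (i.e. the least `k` with
`GoodSuffix σ k`), the number of indices `i` with `k - 1 ≤ i ≤ n` and
`δᵢ ≡ 1 (mod 4)`; `0` if no good suffix exists. -/
noncomputable def mNWp (σ : List Turn) : ℕ :=
  if ∃ k, GoodSuffix σ k then
    Nat.card {i : ℕ // sInf {k | GoodSuffix σ k} - 1 ≤ i ∧ i ≤ σ.length ∧
      delta σ i % 4 = 1}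
  else 0

/-- The number of vertical segments of the chain `C` meeting the closed horizontal
segment from the origin to `(a, 0)`. -/
def verticalCrossCount (σ : List Turn) (C : Chain σ) (a : ℤ) : ℕ :=
  ((Finset.range (σ.length + 1)).filter fun i =>
    (C.pts i).1 = (C.pts (i + 1)).1 ∧
    0 ≤ (C.pts i).1 ∧ (C.pts i).1 ≤ a ∧
    min (C.pts i).2 (C.pts (i + 1)).2 ≤ 0 ∧ 0 ≤ max (C.pts i).2 (C.pts (i + 1)).2).card

/-- The unit direction of the `(i+1)`-st segment of the chain `C`. -/
def dirOf (σ : List Turn) (C : Chain σ) (i : ℕ) : ℤ × ℤ := unitDir (C.pts i) (C.pts (i + 1))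

/-- `z₁mz₂ᵒ(C)`: the number of `z₂`-segments in the maximal `(z₁,z₂)`-staircase subchain
of `C` containing the origin (the longest prefix of segments directed `z₁` or `z₂`);
`0` if no such subchain exists. -/
noncomputable def stairCountO (σ : List Turn) (C : Chain σ) (z₁ z₂ : ℤ × ℤ) : ℕ :=
  Nat.card {i : ℕ // i ≤ σ.length ∧ dirOf σ C i = z₂ ∧
    ∀ j ≤ i, dirOf σ C j = z₁ ∨ dirOf σ C j = z₂}

/-- `z₁mz₂ᵖ(C)`: the number of `z₂`-segments in the maximal `(z₁,z₂)`-staircase subchain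
of `C` containing the endpoint (the longest suffix of segments directed `z₁` or `z₂`);
`0` if no such subchain exists. -/
noncomputable def stairCountP (σ : List Turn) (C : Chain σ) (z₁ z₂ : ℤ × ℤ) : ℕ :=
  Nat.card {i : ℕ // i ≤ σ.length ∧ dirOf σ C i = z₂ ∧
    ∀ j, i ≤ j → j ≤ σ.length → dirOf σ C j = z₁ ∨ dirOf σ C j = z₂}


/-- Apply coordinatewise maps to a point. -/
def pmap (g₁ g₂ : ℤ → ℤ) (q : ℤ × ℤ) : ℤ × ℤ := (g₁ q.1, g₂ q.2)

lemma mem_segSet {u v q : ℤ × ℤ} :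
    q ∈ segSet u v ↔ min u.1 v.1 ≤ q.1 ∧ q.1 ≤ max u.1 v.1 ∧
      min u.2 v.2 ≤ q.2 ∧ q.2 ≤ max u.2 v.2 := Iff.rfl

lemma mem_segSet_pmap {g₁ g₂ : ℤ → ℤ} (h₁ : Monotone g₁) (h₂ : Monotone g₂)
    {u v q : ℤ × ℤ} :
    q ∈ segSet (pmap g₁ g₂ u) (pmap g₁ g₂ v) ↔
      g₁ (min u.1 v.1) ≤ q.1 ∧ q.1 ≤ g₁ (max u.1 v.1) ∧
      g₂ (min u.2 v.2) ≤ q.2 ∧ q.2 ≤ g₂ (max u.2 v.2) := by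
  rw [mem_segSet]
  simp only [pmap, h₁.map_min, h₁.map_max, h₂.map_min, h₂.map_max]

lemma pmap_inter_empty {g₁ g₂ : ℤ → ℤ} (h₁ : StrictMono g₁) (h₂ : StrictMono g₂)
    (u v u' v' : ℤ × ℤ) (h : segSet u v ∩ segSet u' v' = ∅) :
    segSet (pmap g₁ g₂ u) (pmap g₁ g₂ v) ∩ segSet (pmap g₁ g₂ u') (pmap g₁ g₂ v') = ∅ := by
  rw [Set.eq_empty_iff_forall_notMem] at h ⊢
  intro q hq
  obtain ⟨hq1, hq2⟩ := hq
  rw [mem_segSet_pmap h₁.monotone h₂.monotone] at hq1 hq2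
  have hx1 : max (min u.1 v.1) (min u'.1 v'.1) ≤ max u.1 v.1 := by
    have : g₁ (max (min u.1 v.1) (min u'.1 v'.1)) ≤ g₁ (max u.1 v.1) := by
      rw [h₁.monotone.map_max]
      exact max_le (hq1.1.trans hq1.2.1) (hq2.1.trans hq1.2.1)
    exact h₁.le_iff_le.mp this
  have hx2 : max (min u.1 v.1) (min u'.1 v'.1) ≤ max u'.1 v'.1 := by
    have : g₁ (max (min u.1 v.1) (min u'.1 v'.1)) ≤ g₁ (max u'.1 v'.1) := by
      rw [h₁.monotone.map_max]
      exact max_le (hq1.1.trans hq2.2.1) (hq2.1.trans hq2.2.1)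
    exact h₁.le_iff_le.mp this
  have hy1 : max (min u.2 v.2) (min u'.2 v'.2) ≤ max u.2 v.2 := by
    have : g₂ (max (min u.2 v.2) (min u'.2 v'.2)) ≤ g₂ (max u.2 v.2) := by
      rw [h₂.monotone.map_max]
      exact max_le (hq1.2.2.1.trans hq1.2.2.2) (hq2.2.2.1.trans hq1.2.2.2)
    exact h₂.le_iff_le.mp this
  have hy2 : max (min u.2 v.2) (min u'.2 v'.2) ≤ max u'.2 v'.2 := by
    have : g₂ (max (min u.2 v.2) (min u'.2 v'.2)) ≤ g₂ (max u'.2 v'.2) := by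
      rw [h₂.monotone.map_max]
      exact max_le (hq1.2.2.1.trans hq2.2.2.2) (hq2.2.2.1.trans hq2.2.2.2)
    exact h₂.le_iff_le.mp this
  exact h (max (min u.1 v.1) (min u'.1 v'.1), max (min u.2 v.2) (min u'.2 v'.2))
    ⟨⟨le_max_left _ _, hx1, le_max_left _ _, hy1⟩,
     ⟨le_max_right _ _, hx2, le_max_right _ _, hy2⟩⟩

lemma pmap_inter_singleton {g₁ g₂ : ℤ → ℤ} (h₁ : StrictMono g₁) (h₂ : StrictMono g₂)
    (u v u' v' p : ℤ × ℤ) (h : segSet u v ∩ segSet u' v' = {p}) :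
    segSet (pmap g₁ g₂ u) (pmap g₁ g₂ v) ∩ segSet (pmap g₁ g₂ u') (pmap g₁ g₂ v')
      = {pmap g₁ g₂ p} := by
  have hp : p ∈ segSet u v ∩ segSet u' v' := by rw [h]; exact rfl
  obtain ⟨hp1, hp2⟩ := hp
  rw [mem_segSet] at hp1 hp2
  have e1 : max (min u.1 v.1) (min u'.1 v'.1) = p.1 := by
    have hm : (max (min u.1 v.1) (min u'.1 v'.1), p.2) ∈ segSet u v ∩ segSet u' v' :=
      ⟨⟨le_max_left _ _, max_le (hp1.1.trans hp1.2.1) (hp2.1.trans hp1.2.1),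
        hp1.2.2.1, hp1.2.2.2⟩,
       ⟨le_max_right _ _, max_le (hp1.1.trans hp2.2.1) (hp2.1.trans hp2.2.1),
        hp2.2.2.1, hp2.2.2.2⟩⟩
    rw [h] at hm
    exact congrArg Prod.fst hm
  have e2 : min (max u.1 v.1) (max u'.1 v'.1) = p.1 := by
    have hm : (min (max u.1 v.1) (max u'.1 v'.1), p.2) ∈ segSet u v ∩ segSet u' v' :=
      ⟨⟨le_min (hp1.1.trans hp1.2.1) (hp1.1.trans hp2.2.1), min_le_left _ _,
        hp1.2.2.1, hp1.2.2.2⟩,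
       ⟨le_min (hp2.1.trans hp1.2.1) (hp2.1.trans hp2.2.1), min_le_right _ _,
        hp2.2.2.1, hp2.2.2.2⟩⟩
    rw [h] at hm
    exact congrArg Prod.fst hm
  have e3 : max (min u.2 v.2) (min u'.2 v'.2) = p.2 := by
    have hm : (p.1, max (min u.2 v.2) (min u'.2 v'.2)) ∈ segSet u v ∩ segSet u' v' :=
      ⟨⟨hp1.1, hp1.2.1, le_max_left _ _,
        max_le (hp1.2.2.1.trans hp1.2.2.2) (hp2.2.2.1.trans hp1.2.2.2)⟩,
       ⟨hp2.1, hp2.2.1, le_max_right _ _,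
        max_le (hp1.2.2.1.trans hp2.2.2.2) (hp2.2.2.1.trans hp2.2.2.2)⟩⟩
    rw [h] at hm
    exact congrArg Prod.snd hm
  have e4 : min (max u.2 v.2) (max u'.2 v'.2) = p.2 := by
    have hm : (p.1, min (max u.2 v.2) (max u'.2 v'.2)) ∈ segSet u v ∩ segSet u' v' :=
      ⟨⟨hp1.1, hp1.2.1, le_min (hp1.2.2.1.trans hp1.2.2.2) (hp1.2.2.1.trans hp2.2.2.2),
        min_le_left _ _⟩,
       ⟨hp2.1, hp2.2.1, le_min (hp2.2.2.1.trans hp1.2.2.2) (hp2.2.2.1.trans hp2.2.2.2),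
        min_le_right _ _⟩⟩
    rw [h] at hm
    exact congrArg Prod.snd hm
  ext q
  simp only [Set.mem_inter_iff, Set.mem_singleton_iff]
  rw [mem_segSet_pmap h₁.monotone h₂.monotone, mem_segSet_pmap h₁.monotone h₂.monotone]
  constructor
  · rintro ⟨⟨a1, a2, a3, a4⟩, ⟨b1, b2, b3, b4⟩⟩
    have hx : q.1 = g₁ p.1 := by
      have hl : g₁ p.1 ≤ q.1 := by
        rw [← e1, h₁.monotone.map_max]; exact max_le a1 b1
      have hr : q.1 ≤ g₁ p.1 := by
        rw [← e2, h₁.monotone.map_min]; exact le_min a2 b2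
      omega
    have hy : q.2 = g₂ p.2 := by
      have hl : g₂ p.2 ≤ q.2 := by
        rw [← e3, h₂.monotone.map_max]; exact max_le a3 b3
      have hr : q.2 ≤ g₂ p.2 := by
        rw [← e4, h₂.monotone.map_min]; exact le_min a4 b4
      omega
    exact Prod.ext hx hy
  · rintro rfl
    exact ⟨⟨h₁.monotone hp1.1, h₁.monotone hp1.2.1, h₂.monotone hp1.2.2.1,
            h₂.monotone hp1.2.2.2⟩,
           ⟨h₁.monotone hp2.1, h₁.monotone hp2.2.1, h₂.monotone hp2.2.2.1,
            h₂.monotone hp2.2.2.2⟩⟩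

lemma strictMono_sign_sub {g : ℤ → ℤ} (hg : StrictMono g) (x y : ℤ) :
    (g y - g x).sign = (y - x).sign := by
  rcases lt_trichotomy x y with h | h | h
  · have h1 := hg h
    rw [Int.sign_eq_one_of_pos (by omega), Int.sign_eq_one_of_pos (by omega)]
  · simp [h]
  · have h1 := hg h
    rw [Int.sign_eq_neg_one_of_neg (by omega), Int.sign_eq_neg_one_of_neg (by omega)]

lemma unitDir_pmap {g₁ g₂ : ℤ → ℤ} (h₁ : StrictMono g₁) (h₂ : StrictMono g₂)
    (u v : ℤ × ℤ) : unitDir (pmap g₁ g₂ u) (pmap g₁ g₂ v) = unitDir u v := by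
  unfold unitDir pmap
  simp only
  rw [strictMono_sign_sub h₁, strictMono_sign_sub h₂]

/-- Stretching a chain by strictly monotone coordinate maps fixing the origin. -/
def chainStretch {σ : List Turn} (C : Chain σ) (g₁ g₂ : ℤ → ℤ)
    (h₁ : StrictMono g₁) (h₂ : StrictMono g₂) (z₁ : g₁ 0 = 0) (z₂ : g₂ 0 = 0) :
    Chain σ where
  pts i := pmap g₁ g₂ (C.pts i)
  start_eq := by
    show pmap g₁ g₂ (C.pts 0) = (0, 0)
    rw [C.start_eq]; simp [pmap, z₁, z₂]
  first_seg := by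
    obtain ⟨t, ht, he⟩ := C.first_seg
    refine ⟨g₁ t, ?_, ?_⟩
    swap
    · show pmap g₁ g₂ (C.pts 1) = (g₁ t, 0)
      rw [he]; simp [pmap, z₂]
    rw [← z₁]; exact h₁ ht
  axis_parallel := fun i hi => by
    rcases C.axis_parallel i hi with ⟨h, h'⟩ | ⟨h, h'⟩
    · exact Or.inl ⟨congrArg g₁ h, fun hc => h' (h₂.injective hc)⟩
    · exact Or.inr ⟨congrArg g₂ h, fun hc => h' (h₁.injective hc)⟩
  turns := fun i h => by
    show unitDir (pmap g₁ g₂ _) (pmap g₁ g₂ _) = _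
    rw [unitDir_pmap h₁ h₂, unitDir_pmap h₁ h₂]
    exact C.turns i h
  simple_adj := fun i hi =>
    pmap_inter_singleton h₁ h₂ _ _ _ _ _ (C.simple_adj i hi)
  simple_nonadj := fun i j hij hj =>
    pmap_inter_empty h₁ h₂ _ _ _ _ (C.simple_nonadj i j hij hj)

/-- The piecewise shift map used for stretching. -/
def stf (c s : ℤ) (x : ℤ) : ℤ :=
  if 0 < c then (if c ≤ x then x + s else x) else (if x ≤ c then x - s else x)

lemma stf_strictMono (c s : ℤ) (hs : 0 ≤ s) : StrictMono (stf c s) := by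
  intro x y hxy
  unfold stf
  split_ifs <;> omega

lemma stf_zero (c s : ℤ) (hc : c ≠ 0) : stf c s 0 = 0 := by
  unfold stf
  split_ifs <;> omega

lemma stf_self (c s : ℤ) (hc : c ≠ 0) : stf c s c = c + c.sign * s := by
  unfold stf
  rcases lt_trichotomy c 0 with h | h | h
  · rw [Int.sign_eq_neg_one_of_neg h]
    split_ifs <;> omega
  · exact absurd h hc
  · rw [Int.sign_eq_one_of_pos h]
    split_ifs <;> omega

/-- **Stretching Lemma, part (1).** If `σ` has at least one turn and `(a, b)` with
`a ≠ 0`, `b ≠ 0` is reachable by `σ`, then the whole quadrant `Q⁺((a,b))` is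
contained in `A(σ)`. -/
theorem stretching_lemma_quadrant (σ : List Turn) (hσ : 1 ≤ σ.length)
    (a b : ℤ) (ha : a ≠ 0) (hb : b ≠ 0) (hp : (a, b) ∈ ReachSet σ) :
    Qplus (a, b) ⊆ ReachSet σ := by
  obtain ⟨C, hC⟩ := hp
  intro q hq
  obtain ⟨⟨i, j, hi, hqv⟩, ⟨i', j', hj', hqh⟩⟩ := hq
  refine ⟨chainStretch C (stf a i) (stf b j') (stf_strictMono a i hi)
    (stf_strictMono b j' hj') (stf_zero a i ha) (stf_zero b j' hb), ?_⟩
  show pmap (stf a i) (stf b j') (C.pts (σ.length + 1)) = q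
  rw [hC]
  have hq1 : q.1 = a + a.sign * i := congrArg Prod.fst hqv
  have hq2 : q.2 = b + b.sign * j' := congrArg Prod.snd hqh
  show (stf a i a, stf b j' b) = q
  rw [stf_self a i ha, stf_self b j' hb, ← hq1, ← hq2]
end

section
/- Reachable set of staircases: If σ is the empty turn sequence (n = 0), then A(σ) = {(a,0) : a ∈ ℤ, a ≥ 1}. If σ is a staircase of length n ≥ 1 with σ₁ = L, then A(σ) = Q⁺((1 + ⌊n/2⌋, ⌈n/2⌉)); if σ is a staircase of length n ≥ 1 with σ₁ = R, then A(σ) = Q⁺((1 + ⌊n/2⌋, −⌈n/2⌉)). -/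
lemma turn_cases (t : Turn) : t = Turn.L ∨ t = Turn.R := by cases t <;> simp

lemma stair_get (σ : List Turn) (hs : IsStaircase σ) (s : Turn) (hh : σ.head? = some s) :
    ∀ i (h : i < σ.length),
      σ.get ⟨i, h⟩ = if i % 2 = 0 then s else (if s = Turn.L then Turn.R else Turn.L) := by
  intro i
  induction i with
  | zero =>
    intro h
    cases σ with
    | nil => simp at h
    | cons a l => simp_all
  | succ i ih =>
    intro h
    have key : σ.get ⟨i, by omega⟩ ≠ σ.get ⟨i+1, by omega⟩ :=
      List.isChain_iff_getElem.mp hs i (by omega)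
    have hi := ih (by omega)
    rw [hi] at key
    rcases turn_cases s with rfl | rfl <;>
      rcases turn_cases (σ.get ⟨i+1, h⟩) with h2 | h2 <;>
      rw [h2] <;> split_ifs at key ⊢ <;> simp_all <;> omega
lemma chain_dir (σ : List Turn) (s : Turn) (hs : IsStaircase σ)
    (hh : σ.head? = some s) (ε : ℤ) (hε : ε = if s = Turn.L then 1 else -1)
    (C : Chain σ) :
    ∀ i ≤ σ.length, dirOf σ C i = if i % 2 = 0 then (1, 0) else (0, ε) := by
  intro i
  induction i with
  | zero =>
    intro _
    obtain ⟨t, ht, h1⟩ := C.first_seg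
    simp [dirOf, unitDir, C.start_eq, h1, Int.sign_eq_one_iff_pos.mpr ht]
  | succ i ih =>
    intro h
    have hd := ih (by omega)
    have hturn := C.turns i (by omega)
    have hget := stair_get σ hs s hh i (by omega)
    rw [hget] at hturn
    rw [show unitDir (C.pts i) (C.pts (i+1)) = dirOf σ C i from rfl, hd] at hturn
    have hgoal : dirOf σ C (i+1) = unitDir (C.pts (i + 1)) (C.pts (i + 2)) := rfl
    rw [hgoal, hturn]
    have hm : i % 2 = 0 ∨ i % 2 = 1 := Nat.mod_two_eq_zero_or_one i
    subst hε
    rcases turn_cases s with rfl | rfl <;>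
        rcases hm with hm | hm <;>
        have hm' : (i+1) % 2 = 1 - i % 2 := by omega
    all_goals simp [hm, hm', rotCCW, rotCW]
lemma chain_coords (σ : List Turn) (C : Chain σ) (ε : ℤ) (hε : ε = 1 ∨ ε = -1)
    (hd : ∀ i ≤ σ.length, dirOf σ C i = if i % 2 = 0 then (1, 0) else (0, ε)) :
    ∀ m ≤ σ.length + 1,
      (((m + 1) / 2 : ℕ) : ℤ) ≤ (C.pts m).1 ∧ ((m / 2 : ℕ) : ℤ) ≤ ε * (C.pts m).2 := by
  intro m
  induction m with
  | zero => intro _; simp [C.start_eq]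
  | succ m ih =>
    intro h
    obtain ⟨hx, hy⟩ := ih (by omega)
    have hdm := hd m (by omega)
    have hm : m % 2 = 0 ∨ m % 2 = 1 := Nat.mod_two_eq_zero_or_one m
    simp only [dirOf, unitDir, Prod.ext_iff] at hdm
    rcases hm with hm | hm
    · rw [if_pos hm] at hdm
      obtain ⟨h1, h2⟩ := hdm
      have hx' : (C.pts m).1 < (C.pts (m+1)).1 := by
        have := Int.sign_eq_one_iff_pos.mp h1; omega
      have hy' : (C.pts (m+1)).2 = (C.pts m).2 := by
        have := Int.sign_eq_zero_iff_zero.mp h2; omega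
      rw [hy']
      constructor
      · omega
      · omega
    · rw [if_neg (by omega)] at hdm
      obtain ⟨h1, h2⟩ := hdm
      have hx' : (C.pts (m+1)).1 = (C.pts m).1 := by
        have := Int.sign_eq_zero_iff_zero.mp h1; omega
      have hy' : (((m+1) / 2 : ℕ) : ℤ) ≤ ε * (C.pts (m+1)).2 := by
        rcases hε with rfl | rfl
        · have := Int.sign_eq_one_iff_pos.mp h2; omega
        · have : ((C.pts (m+1)).2 - (C.pts m).2).sign = -1 := by omega
          have := Int.sign_eq_neg_one_iff_neg.mp this; omega
      rw [hx']
      exact ⟨by omega, by omega⟩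
/-- x-coordinates of the constructed staircase chain. -/
def auxX (a : ℤ) (m : ℕ) : ℤ := (((m + 1) / 2 : ℕ) : ℤ) + (if 1 ≤ m then a else 0)

/-- unsigned y-coordinates of the constructed staircase chain. -/
def auxY (b : ℤ) (m : ℕ) : ℤ := ((m / 2 : ℕ) : ℤ) + (if 2 ≤ m then b else 0)

lemma auxX_lt (a : ℤ) (ha : 0 ≤ a) (m : ℕ) (hm : m % 2 = 0) : auxX a m < auxX a (m + 1) := by
  simp only [auxX]; split_ifs <;> omega

lemma auxX_eq (a : ℤ) (m : ℕ) (hm : m % 2 = 1) : auxX a (m + 1) = auxX a m := by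
  simp only [auxX]; split_ifs <;> omega

lemma auxY_lt (b : ℤ) (hb : 0 ≤ b) (m : ℕ) (hm : m % 2 = 1) : auxY b m < auxY b (m + 1) := by
  simp only [auxY]; split_ifs <;> omega

lemma auxY_eq (b : ℤ) (m : ℕ) (hm : m % 2 = 0) : auxY b (m + 1) = auxY b m := by
  simp only [auxY]; split_ifs <;> omega

lemma auxX_mono (a : ℤ) (ha : 0 ≤ a) {i j : ℕ} (h : i ≤ j) : auxX a i ≤ auxX a j := by
  simp only [auxX]; split_ifs <;> omega

lemma auxY_mono (b : ℤ) (hb : 0 ≤ b) {i j : ℕ} (h : i ≤ j) : auxY b i ≤ auxY b j := by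
  simp only [auxY]; split_ifs <;> omega

lemma chain_construct (σ : List Turn) (s : Turn) (hs : IsStaircase σ) (hlen : 1 ≤ σ.length)
    (hh : σ.head? = some s) (ε : ℤ) (hε : ε = if s = Turn.L then 1 else -1)
    (a b : ℤ) (ha : 0 ≤ a) (hb : 0 ≤ b) :
    ∃ C : Chain σ,
      C.pts (σ.length + 1) =
        ((((σ.length + 2) / 2 : ℕ) : ℤ) + a, ε * ((((σ.length + 1) / 2 : ℕ) : ℤ) + b)) := by
  have hε' : ε = 1 ∨ ε = -1 := by
    rcases turn_cases s with rfl | rfl <;> simp [hε]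
  set P : ℕ → ℤ × ℤ := fun m => (auxX a m, ε * auxY b m) with hP
  have hPx : ∀ m, (P m).1 = auxX a m := fun m => rfl
  have hPy : ∀ m, (P m).2 = ε * auxY b m := fun m => rfl
  have hdir : ∀ i, unitDir (P i) (P (i + 1)) = if i % 2 = 0 then ((1 : ℤ), (0 : ℤ)) else (0, ε) := by
    intro i
    have hm : i % 2 = 0 ∨ i % 2 = 1 := Nat.mod_two_eq_zero_or_one i
    rcases hm with hm | hm
    · rw [if_pos hm]
      have h1 := auxX_lt a ha i hm
      have h2 := auxY_eq b i hm
      simp only [unitDir, hPx, hPy, Prod.mk.injEq, h2]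
      constructor
      · exact Int.sign_eq_one_iff_pos.mpr (by omega)
      · simp
    · rw [if_neg (by omega)]
      have h1 := auxX_eq a i hm
      have h2 := auxY_lt b hb i hm
      simp only [unitDir, hPx, hPy, Prod.mk.injEq, h1]
      refine ⟨by simp, ?_⟩
      rcases hε' with rfl | rfl
      · simpa using Int.sign_eq_one_iff_pos.mpr (show 0 < auxY b (i + 1) - auxY b i by omega)
      · simpa using Int.sign_eq_neg_one_iff_neg.mpr (show -auxY b (i + 1) - -auxY b i < 0 by omega)
  refine ⟨⟨P, ?_, ?_, ?_, ?_, ?_, ?_⟩, ?_⟩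
  · -- start_eq
    simp [hP, auxX, auxY]
  · -- first_seg
    refine ⟨1 + a, by omega, ?_⟩
    have h1 : auxX a 1 = 1 + a := by simp [auxX]
    have h2 : auxY b 1 = 0 := by simp [auxY]
    simp [hP, h1, h2]
  · -- axis_parallel
    intro i _
    have hm : i % 2 = 0 ∨ i % 2 = 1 := Nat.mod_two_eq_zero_or_one i
    rcases hm with hm | hm
    · right
      have h1 := auxX_lt a ha i hm
      have h2 := auxY_eq b i hm
      exact ⟨by simp only [hPy, h2], by simp only [hPx]; omega⟩
    · left
      have h1 := auxX_eq a i hm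
      have h2 := auxY_lt b hb i hm
      refine ⟨by simp only [hPx, h1], ?_⟩
      simp only [hPy]
      rcases hε' with rfl | rfl <;> omega
  · -- turns
    intro i hi
    rw [stair_get σ hs s hh i hi, hdir, hdir]
    have hm : i % 2 = 0 ∨ i % 2 = 1 := Nat.mod_two_eq_zero_or_one i
    subst hε
    rcases turn_cases s with rfl | rfl <;>
        rcases hm with hm | hm <;>
        have hm' : (i + 1) % 2 = 1 - i % 2 := by omega
    all_goals simp [hm, hm', rotCCW, rotCW]
  · -- simple_adj
    intro i _
    ext q
    simp only [Set.mem_inter_iff, segSet, Set.mem_setOf_eq, Set.mem_singleton_iff,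
      Prod.ext_iff, hPx, hPy]
    have hm : i % 2 = 0 ∨ i % 2 = 1 := Nat.mod_two_eq_zero_or_one i
    rcases hm with hm | hm
    · have h1 := auxX_lt a ha i hm
      have h2 := auxY_eq b i hm
      have h3 : auxX a (i + 2) = auxX a (i + 1) := auxX_eq a (i + 1) (by omega)
      have h4 : auxY b (i + 1) < auxY b (i + 2) := auxY_lt b hb (i + 1) (by omega)
      rcases hε' with rfl | rfl <;> omega
    · have h1 := auxX_eq a i hm
      have h2 := auxY_lt b hb i hm
      have h3 : auxX a (i + 1) < auxX a (i + 2) := auxX_lt a ha (i + 1) (by omega)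
      have h4 : auxY b (i + 2) = auxY b (i + 1) := auxY_eq b (i + 1) (by omega)
      rcases hε' with rfl | rfl <;> omega
  · -- simple_nonadj
    intro i j hij hj
    rw [Set.eq_empty_iff_forall_notMem]
    intro q hq
    simp only [Set.mem_inter_iff, segSet, Set.mem_setOf_eq, hPx, hPy] at hq
    have hXij : auxX a (i + 2) ≤ auxX a j := auxX_mono a ha (by omega)
    have hYij : auxY b (i + 2) ≤ auxY b j := auxY_mono b hb (by omega)
    have hXj : auxX a j ≤ auxX a (j + 1) := auxX_mono a ha (by omega)
    have hYj : auxY b j ≤ auxY b (j + 1) := auxY_mono b hb (by omega)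
    have hm : i % 2 = 0 ∨ i % 2 = 1 := Nat.mod_two_eq_zero_or_one i
    rcases hm with hm | hm
    · have h1 := auxX_lt a ha i hm
      have h2 := auxY_eq b i hm
      have h4 : auxY b (i + 1) < auxY b (i + 2) := auxY_lt b hb (i + 1) (by omega)
      rcases hε' with rfl | rfl <;> omega
    · have h1 := auxX_eq a i hm
      have h2 := auxY_lt b hb i hm
      have h3 : auxX a (i + 1) < auxX a (i + 2) := auxX_lt a ha (i + 1) (by omega)
      rcases hε' with rfl | rfl <;> omega
  · -- endpoint
    have h1 : auxX a (σ.length + 1) = (((σ.length + 2) / 2 : ℕ) : ℤ) + a := by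
      simp only [auxX]; split_ifs <;> omega
    have h2 : auxY b (σ.length + 1) = (((σ.length + 1) / 2 : ℕ) : ℤ) + b := by
      simp only [auxY]; split_ifs <;> omega
    simp [hP, h1, h2]
/-- **Reachable set of staircases.** For the empty sequence, `A(σ)` is the set of
points `(a, 0)` with `a ≥ 1`; for a nonempty staircase starting with `L`
(resp. `R`), `A(σ) = Q⁺((1 + ⌊n/2⌋, ⌈n/2⌉))` (resp. `Q⁺((1 + ⌊n/2⌋, -⌈n/2⌉))`). -/
theorem staircase_reachable_set (σ : List Turn) :
    (σ = [] → ReachSet σ = {q : ℤ × ℤ | ∃ a : ℤ, 1 ≤ a ∧ q = (a, 0)}) ∧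
    (IsStaircase σ → 1 ≤ σ.length → σ.head? = some Turn.L →
      ReachSet σ =
        Qplus (((1 + σ.length / 2 : ℕ) : ℤ), (((σ.length + 1) / 2 : ℕ) : ℤ))) ∧
    (IsStaircase σ → 1 ≤ σ.length → σ.head? = some Turn.R →
      ReachSet σ =
        Qplus (((1 + σ.length / 2 : ℕ) : ℤ), -(((σ.length + 1) / 2 : ℕ) : ℤ))) := by
  refine ⟨?_, ?_, ?_⟩
  · -- empty sequence
    rintro rfl
    ext q
    simp only [ReachSet, Set.mem_setOf_eq, List.length_nil]
    constructor
    · rintro ⟨C, hC⟩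
      obtain ⟨t, ht, h1⟩ := C.first_seg
      exact ⟨t, ht, by rw [← hC]; exact h1.symm ▸ rfl⟩
    · rintro ⟨a, ha, rfl⟩
      refine ⟨⟨fun m => if m = 0 then (0, 0) else (a, 0), by simp, ⟨a, by omega, by simp⟩,
        ?_, ?_, ?_, ?_⟩, by simp⟩
      · intro i hi
        simp only [List.length_nil, Nat.le_zero] at hi
        subst hi
        right
        norm_num
        omega
      · intro i h
        simp at h
      · intro i h
        simp at h
      · intro i j h1 h2
        simp only [List.length_nil] at h2
        omega
  · -- staircase starting with L
    intro hs hlen hh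
    have hsgn1 : ((1 + σ.length / 2 : ℕ) : ℤ).sign = 1 := Int.sign_eq_one_iff_pos.mpr (by omega)
    have hsgn2 : (((σ.length + 1) / 2 : ℕ) : ℤ).sign = 1 :=
      Int.sign_eq_one_iff_pos.mpr (by omega)
    ext q
    simp only [ReachSet, Set.mem_setOf_eq, Qplus, Vplus, Hplus, Set.mem_inter_iff]
    constructor
    · rintro ⟨C, rfl⟩
      have hd := chain_dir σ Turn.L hs hh 1 (by simp) C
      have hc := chain_coords σ C 1 (Or.inl rfl) hd (σ.length + 1) le_rfl
      constructor
      · refine ⟨(C.pts (σ.length + 1)).1 - ((1 + σ.length / 2 : ℕ) : ℤ),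
          (C.pts (σ.length + 1)).2, by omega, ?_⟩
        simp only [hsgn1]
        exact Prod.ext (by omega) rfl
      · refine ⟨(C.pts (σ.length + 1)).1,
          (C.pts (σ.length + 1)).2 - (((σ.length + 1) / 2 : ℕ) : ℤ), by omega, ?_⟩
        simp only [hsgn2]
        exact Prod.ext rfl (by omega)
    · rintro ⟨⟨i, j, hi, hq1⟩, ⟨i', j', hj, hq2⟩⟩
      simp only [hsgn1] at hq1
      simp only [hsgn2] at hq2
      obtain ⟨C, hC⟩ := chain_construct σ Turn.L hs hlen hh 1 (by simp) i j'
        (by omega) (by omega)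
      refine ⟨C, ?_⟩
      rw [hC]
      rw [hq1] at hq2 ⊢
      simp only [Prod.mk.injEq] at hq2 ⊢
      omega
  · -- staircase starting with R
    intro hs hlen hh
    have hsgn1 : ((1 + σ.length / 2 : ℕ) : ℤ).sign = 1 := Int.sign_eq_one_iff_pos.mpr (by omega)
    have hsgn2 : (-(((σ.length + 1) / 2 : ℕ) : ℤ)).sign = -1 :=
      Int.sign_eq_neg_one_iff_neg.mpr (by omega)
    ext q
    simp only [ReachSet, Set.mem_setOf_eq, Qplus, Vplus, Hplus, Set.mem_inter_iff]
    constructor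
    · rintro ⟨C, rfl⟩
      have hd := chain_dir σ Turn.R hs hh (-1) (by simp) C
      have hc := chain_coords σ C (-1) (Or.inr rfl) hd (σ.length + 1) le_rfl
      constructor
      · refine ⟨(C.pts (σ.length + 1)).1 - ((1 + σ.length / 2 : ℕ) : ℤ),
          (C.pts (σ.length + 1)).2, by omega, ?_⟩
        simp only [hsgn1]
        exact Prod.ext (by omega) rfl
      · refine ⟨(C.pts (σ.length + 1)).1,
          -(((σ.length + 1) / 2 : ℕ) : ℤ) - (C.pts (σ.length + 1)).2, by omega, ?_⟩
        simp only [hsgn2]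
        exact Prod.ext rfl (by omega)
    · rintro ⟨⟨i, j, hi, hq1⟩, ⟨i', j', hj, hq2⟩⟩
      simp only [hsgn1] at hq1
      simp only [hsgn2] at hq2
      obtain ⟨C, hC⟩ := chain_construct σ Turn.R hs hlen hh (-1) (by simp) i j'
        (by omega) (by omega)
      refine ⟨C, ?_⟩
      rw [hC]
      rw [hq1] at hq2 ⊢
      simp only [Prod.mk.injEq] at hq2 ⊢
      omega
end

section
/- Any turn sequence σ in which the numbers l of L's and r of R's satisfy |l − r| ≥ 5 contains all four types of hooks (an up hook, a down hook, a left hook, and a right hook); consequently A(σ) contains a point on each of the four signed axes, i.e., points (a,0) with a > 0, (a,0) with a < 0, (0,b) with b > 0, and (0,b) with b < 0. -/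
/-! ### delta lemmas -/

lemma delta_zero (σ : List Turn) : delta σ 0 = 0 := by simp [delta]

lemma delta_length (σ : List Turn) : delta σ σ.length = excess σ := by
  simp [delta, excess]

lemma delta_succ (σ : List Turn) (j : ℕ) (h : j < σ.length) :
    delta σ (j + 1) = delta σ j + (if σ.get ⟨j, h⟩ = Turn.L then 1 else -1) := by
  have ht : σ.take (j+1) = σ.take j ++ [σ.get ⟨j,h⟩] := by
    rw [List.take_succ]; simp [List.getElem?_eq_getElem h]
  unfold delta
  rw [ht, List.count_append, List.count_append]
  cases hc : σ.get ⟨j, h⟩ <;> simp [List.count_singleton'] <;> push_cast <;> ring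

lemma delta_step (σ : List Turn) (j : ℕ) (h : j < σ.length) :
    delta σ (j + 1) = delta σ j + 1 ∨ delta σ (j + 1) = delta σ j - 1 := by
  rw [delta_succ σ j h]; split <;> omega

lemma delta_succ_L (σ : List Turn) (j : ℕ) (h : j < σ.length)
    (hd : delta σ (j+1) = delta σ j + 1) : σ.get ⟨j, h⟩ = Turn.L := by
  have := delta_succ σ j h
  by_contra hc
  rw [if_neg hc] at this; omega

lemma delta_succ_R (σ : List Turn) (j : ℕ) (h : j < σ.length)
    (hd : delta σ (j+1) = delta σ j - 1) : σ.get ⟨j, h⟩ ≠ Turn.L := by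
  intro hc
  have := delta_succ σ j h
  rw [if_pos hc] at this; omega

/-- Discrete IVT: an up-arrival at level v in (a, b]. -/
lemma upcross (σ : List Turn) (v : ℤ) (a b : ℕ) (hab : a ≤ b) (hb : b ≤ σ.length)
    (ha : delta σ a < v) (hbv : v ≤ delta σ b) :
    ∃ i, a < i ∧ i ≤ b ∧ delta σ i = v ∧ delta σ (i - 1) = v - 1 := by
  induction b with
  | zero =>
    exfalso
    have : a = 0 := by omega
    subst this; omega
  | succ b ih =>
    by_cases hvb : v ≤ delta σ b
    · have hab' : a ≤ b := by
        by_contra hc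
        have : a = b + 1 := by omega
        subst this; omega
      obtain ⟨i, h1, h2, h3, h4⟩ := ih hab' (by omega) hvb
      exact ⟨i, h1, by omega, h3, h4⟩
    · have hstep := delta_step σ b (by omega)
      have hav : a < b + 1 := by
        by_contra hc
        have : a = b + 1 := by omega
        subst this; omega
      exact ⟨b+1, hav, le_refl _, by omega, by simpa using (by omega : delta σ b = v - 1)⟩

lemma downcross (σ : List Turn) (v : ℤ) (a b : ℕ) (hab : a ≤ b) (hb : b ≤ σ.length)
    (ha : v < delta σ a) (hbv : delta σ b ≤ v) :
    ∃ i, a < i ∧ i ≤ b ∧ delta σ i = v ∧ delta σ (i - 1) = v + 1 := by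
  induction b with
  | zero =>
    exfalso
    have : a = 0 := by omega
    subst this; omega
  | succ b ih =>
    by_cases hvb : delta σ b ≤ v
    · have hab' : a ≤ b := by
        by_contra hc
        have : a = b + 1 := by omega
        subst this; omega
      obtain ⟨i, h1, h2, h3, h4⟩ := ih hab' (by omega) hvb
      exact ⟨i, h1, by omega, h3, h4⟩
    · have hstep := delta_step σ b (by omega)
      have hav : a < b + 1 := by
        by_contra hc
        have : a = b + 1 := by omega
        subst this; omega
      exact ⟨b+1, hav, le_refl _, by omega, by simpa using (by omega : delta σ b = v + 1)⟩

lemma hook_exists_pos (σ : List Turn) (v : ℤ) (h0 : 0 < v) (hv : v < excess σ) :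
    ∃ k, ∃ h : k + 1 < σ.length,
      σ.get ⟨k, by omega⟩ = σ.get ⟨k + 1, h⟩ ∧ delta σ (k + 1) = v := by
  set n := σ.length with hn
  have hdn : delta σ n = excess σ := delta_length σ
  have h0d : delta σ 0 = 0 := delta_zero σ
  set P : ℕ → Prop := fun i => 1 ≤ i ∧ delta σ i = v ∧ delta σ (i-1) = v - 1 with hP
  have : DecidablePred P := fun i => by unfold P; infer_instance
  obtain ⟨i0, hi01, hi0n, hi0v, hi0p⟩ := upcross σ v 0 n (by omega) (le_refl n) (by omega) (by omega)
  set i := Nat.findGreatest P n with hi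
  have hPi : P i := Nat.findGreatest_spec (m := i0) (by omega) ⟨by omega, hi0v, hi0p⟩
  have hin : i ≤ n := Nat.findGreatest_le n
  obtain ⟨hi1, hiv, hip⟩ := hPi
  have hilt : i < n := by
    rcases Nat.lt_or_ge i n with h | h
    · exact h
    · exfalso; have : i = n := by omega
      rw [this] at hiv; omega
  have hstep := delta_step σ i (by omega)
  have hnext : delta σ (i+1) = v + 1 := by
    rcases hstep with h | h
    · omega
    · exfalso
      obtain ⟨j, hj1, hj2, hj3, hj4⟩ :=
        upcross σ v (i+1) n (by omega) (le_refl n) (by omega) (by omega)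
      exact Nat.findGreatest_is_greatest (by omega : i < j) hj2 ⟨by omega, hj3, hj4⟩
  -- now get the hook at k = i - 1
  have hgL1 : σ.get ⟨i - 1, by omega⟩ = Turn.L := by
    have := delta_succ_L σ (i-1) (by omega)
    have he : (i - 1) + 1 = i := by omega
    rw [he] at this
    exact this (by omega)
  have hgL2 : σ.get ⟨i, by omega⟩ = Turn.L := delta_succ_L σ i (by omega) (by omega)
  refine ⟨i - 1, by omega, ?_, ?_⟩
  · rw [hgL1]
    symm
    have hfe : (⟨i - 1 + 1, by omega⟩ : Fin σ.length) = ⟨i, by omega⟩ := by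
      ext; simp; omega
    rw [hfe]
    exact hgL2
  · have he : (i - 1) + 1 = i := by omega
    rw [he]; exact hiv

lemma hook_exists_neg (σ : List Turn) (v : ℤ) (h0 : v < 0) (hv : excess σ < v) :
    ∃ k, ∃ h : k + 1 < σ.length,
      σ.get ⟨k, by omega⟩ = σ.get ⟨k + 1, h⟩ ∧ delta σ (k + 1) = v := by
  set n := σ.length with hn
  have hdn : delta σ n = excess σ := delta_length σ
  have h0d : delta σ 0 = 0 := delta_zero σ
  set P : ℕ → Prop := fun i => 1 ≤ i ∧ delta σ i = v ∧ delta σ (i-1) = v + 1 with hP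
  have : DecidablePred P := fun i => by unfold P; infer_instance
  obtain ⟨i0, hi01, hi0n, hi0v, hi0p⟩ := downcross σ v 0 n (by omega) (le_refl n) (by omega) (by omega)
  set i := Nat.findGreatest P n with hi
  have hPi : P i := Nat.findGreatest_spec (m := i0) (by omega) ⟨by omega, hi0v, hi0p⟩
  have hin : i ≤ n := Nat.findGreatest_le n
  obtain ⟨hi1, hiv, hip⟩ := hPi
  have hilt : i < n := by
    rcases Nat.lt_or_ge i n with h | h
    · exact h
    · exfalso; have : i = n := by omega
      rw [this] at hiv; omega
  have hstep := delta_step σ i (by omega)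
  have hnext : delta σ (i+1) = v - 1 := by
    rcases hstep with h | h
    · exfalso
      obtain ⟨j, hj1, hj2, hj3, hj4⟩ :=
        downcross σ v (i+1) n (by omega) (le_refl n) (by omega) (by omega)
      exact Nat.findGreatest_is_greatest (by omega : i < j) hj2 ⟨by omega, hj3, hj4⟩
    · omega
  have hgR1 : σ.get ⟨i - 1, by omega⟩ ≠ Turn.L := by
    have := delta_succ_R σ (i-1) (by omega)
    have he : (i - 1) + 1 = i := by omega
    rw [he] at this
    exact this (by omega)
  have hgR2 : σ.get ⟨i, by omega⟩ ≠ Turn.L := delta_succ_R σ i (by omega) (by omega)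
  refine ⟨i - 1, by omega, ?_, ?_⟩
  · have h1 : σ.get ⟨i - 1, by omega⟩ = Turn.R := by
      cases hc : σ.get ⟨i - 1, by omega⟩
      · exact absurd hc hgR1
      · rfl
    have h2 : σ.get ⟨i, by omega⟩ = Turn.R := by
      cases hc : σ.get ⟨i, by omega⟩
      · exact absurd hc hgR2
      · rfl
    rw [h1]
    symm
    have hfe : (⟨i - 1 + 1, by omega⟩ : Fin σ.length) = ⟨i, by omega⟩ := by
      ext; simp; omega
    rw [hfe]
    exact h2
  · have he : (i - 1) + 1 = i := by omega
    rw [he]; exact hiv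

/-! ### Auxiliary geometry library -/

def dv (m : ℤ) : ℤ × ℤ :=
  if m % 4 = 0 then (1,0) else if m % 4 = 1 then (0,1)
  else if m % 4 = 2 then (-1,0) else (0,-1)

def dotp (u v : ℤ × ℤ) : ℤ := u.1 * v.1 + u.2 * v.2

def U4 (w : ℤ × ℤ) : Prop := w = (1,0) ∨ w = (0,1) ∨ w = (-1,0) ∨ w = (0,-1)

lemma emod4 (m : ℤ) : m % 4 = 0 ∨ m % 4 = 1 ∨ m % 4 = 2 ∨ m % 4 = 3 := by omega

lemma dv_U4 (m : ℤ) : U4 (dv m) := by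
  unfold dv U4; rcases emod4 m with h|h|h|h <;> simp [h]

lemma dv_congr {m m' : ℤ} (h : m % 4 = m' % 4) : dv m = dv m' := by unfold dv; rw [h]

lemma dv_add_one (m : ℤ) : dv (m + 1) = rotCCW (dv m) := by
  rcases emod4 m with h|h|h|h <;>
    rcases emod4 (m+1) with h2|h2|h2|h2 <;>
    first
      | (exfalso; omega)
      | (simp [dv, rotCCW, h, h2])

lemma dv_sub_one (m : ℤ) : dv (m - 1) = rotCW (dv m) := by
  rcases emod4 m with h|h|h|h <;>
    rcases emod4 (m-1) with h2|h2|h2|h2 <;>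
    first
      | (exfalso; omega)
      | (simp [dv, rotCW, h, h2])

lemma dv_two (m : ℤ) : dv (m + 2) = (-(dv m).1, -(dv m).2) := by
  rcases emod4 m with h|h|h|h <;>
    rcases emod4 (m+2) with h2|h2|h2|h2 <;>
    first
      | (exfalso; omega)
      | (simp [dv, h, h2])

lemma dotp_dv_self (m : ℤ) : dotp (dv m) (dv m) = 1 := by
  rcases emod4 m with h|h|h|h <;> simp [dotp, dv, h]

lemma dotp_dv_perp (m : ℤ) : dotp (dv (m + 1)) (dv m) = 0 := by
  rcases emod4 m with h|h|h|h <;>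
    rcases emod4 (m+1) with h2|h2|h2|h2 <;>
    first
      | (exfalso; omega)
      | (simp [dotp, dv, h, h2])

lemma dotp_dv_perp' (m : ℤ) : dotp (dv m) (dv (m + 1)) = 0 := by
  rcases emod4 m with h|h|h|h <;>
    rcases emod4 (m+1) with h2|h2|h2|h2 <;>
    first
      | (exfalso; omega)
      | (simp [dotp, dv, h, h2])

lemma dotp_abs_le {u w : ℤ × ℤ} (hu : U4 u) (hw : U4 w) : |dotp u w| ≤ 1 := by
  rcases hu with rfl|rfl|rfl|rfl <;> rcases hw with rfl|rfl|rfl|rfl <;> simp [dotp]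

lemma seg_dotp_bounds {w : ℤ × ℤ} (hw : U4 w) {u v q : ℤ × ℤ} (hq : q ∈ segSet u v) :
    min (dotp u w) (dotp v w) ≤ dotp q w ∧ dotp q w ≤ max (dotp u w) (dotp v w) := by
  obtain ⟨h1, h2, h3, h4⟩ := hq
  rcases hw with rfl|rfl|rfl|rfl <;> simp [dotp] <;> omega

lemma seg_disj {w : ℤ × ℤ} (hw : U4 w) {u1 v1 u2 v2 : ℤ × ℤ}
    (h : max (dotp u1 w) (dotp v1 w) < min (dotp u2 w) (dotp v2 w)) :
    segSet u1 v1 ∩ segSet u2 v2 = ∅ := by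
  ext q
  simp only [Set.mem_inter_iff, Set.mem_empty_iff_false, iff_false, not_and]
  intro h1 h2
  have b1 := seg_dotp_bounds hw h1
  have b2 := seg_dotp_bounds hw h2
  omega

lemma seg_corner {A B C u w : ℤ × ℤ} (hu : U4 u) (hw : U4 w) (hperp : dotp u w = 0)
    {s s' : ℤ} (hs : 0 < s) (hs' : 0 < s')
    (hB1 : B.1 = A.1 + s * u.1) (hB2 : B.2 = A.2 + s * u.2)
    (hC1 : C.1 = B.1 + s' * w.1) (hC2 : C.2 = B.2 + s' * w.2) :
    segSet A B ∩ segSet B C = {B} := by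
  rcases hu with rfl|rfl|rfl|rfl <;> rcases hw with rfl|rfl|rfl|rfl <;>
    first
      | (simp [dotp] at hperp; done)
      | (ext q
         simp only [segSet, Set.mem_inter_iff, Set.mem_setOf_eq, Set.mem_singleton_iff,
           Prod.ext_iff]
         norm_num at hB1 hB2 hC1 hC2 ⊢
         omega)

lemma seg_disj' {w : ℤ × ℤ} (hw : U4 w) {u1 v1 u2 v2 : ℤ × ℤ}
    (h : max (dotp u2 w) (dotp v2 w) < min (dotp u1 w) (dotp v1 w)) :
    segSet u1 v1 ∩ segSet u2 v2 = ∅ := by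
  rw [Set.inter_comm]; exact seg_disj hw h

/-! ### Chains from length data -/

lemma dotp_dv_perp_sub (m : ℤ) : dotp (dv m) (dv (m - 1)) = 0 := by
  rcases emod4 m with h|h|h|h <;>
    rcases emod4 (m-1) with h2|h2|h2|h2 <;>
    first
      | (exfalso; omega)
      | (simp [dotp, dv, h, h2])

def cpt (σ : List Turn) (t : ℕ → ℤ) (j : ℕ) : ℤ × ℤ :=
  (∑ c ∈ Finset.range j, t c * (dv (delta σ c)).1,
   ∑ c ∈ Finset.range j, t c * (dv (delta σ c)).2)

lemma cpt_zero (σ : List Turn) (t : ℕ → ℤ) : cpt σ t 0 = (0,0) := by simp [cpt]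

lemma cpt_succ_fst (σ : List Turn) (t : ℕ → ℤ) (j : ℕ) :
    (cpt σ t (j+1)).1 = (cpt σ t j).1 + t j * (dv (delta σ j)).1 := by
  simp [cpt, Finset.sum_range_succ]

lemma cpt_succ_snd (σ : List Turn) (t : ℕ → ℤ) (j : ℕ) :
    (cpt σ t (j+1)).2 = (cpt σ t j).2 + t j * (dv (delta σ j)).2 := by
  simp [cpt, Finset.sum_range_succ]

lemma dotp_cpt (σ : List Turn) (t : ℕ → ℤ) (w : ℤ × ℤ) (j : ℕ) :
    dotp (cpt σ t j) w = ∑ c ∈ Finset.range j, t c * dotp (dv (delta σ c)) w := by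
  unfold dotp cpt
  simp only
  rw [Finset.sum_mul, Finset.sum_mul, ← Finset.sum_add_distrib]
  exact Finset.sum_congr rfl (fun c _ => by ring)

lemma dotp_cpt_diff (σ : List Turn) (t : ℕ → ℤ) (w : ℤ × ℤ) {m m' : ℕ} (h : m ≤ m') :
    dotp (cpt σ t m') w
      = dotp (cpt σ t m) w + ∑ c ∈ Finset.Ico m m', t c * dotp (dv (delta σ c)) w := by
  rw [dotp_cpt, dotp_cpt, Finset.sum_Ico_eq_sub _ h]; ring

lemma sum_dotp_bound (σ : List Turn) (t : ℕ → ℤ) {w : ℤ × ℤ} (hw : U4 w) (s : Finset ℕ)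
    (ht : ∀ c ∈ s, 0 ≤ t c) :
    |∑ c ∈ s, t c * dotp (dv (delta σ c)) w| ≤ ∑ c ∈ s, t c := by
  refine le_trans (Finset.abs_sum_le_sum_abs _ _) (Finset.sum_le_sum fun c hc => ?_)
  rw [abs_mul, abs_of_nonneg (ht c hc)]
  have h1 := dotp_abs_le (dv_U4 (delta σ c)) hw
  have h0 := ht c hc
  nlinarith [abs_nonneg (dotp (dv (delta σ c)) w)]

lemma unitDir_cpt (σ : List Turn) (t : ℕ → ℤ) (j : ℕ) (h : 0 < t j) :
    unitDir (cpt σ t j) (cpt σ t (j+1)) = dv (delta σ j) := by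
  have h1 : (cpt σ t (j+1)).1 - (cpt σ t j).1 = t j * (dv (delta σ j)).1 := by
    rw [cpt_succ_fst]; ring
  have h2 : (cpt σ t (j+1)).2 - (cpt σ t j).2 = t j * (dv (delta σ j)).2 := by
    rw [cpt_succ_snd]; ring
  have hs1 : (t j).sign = 1 := Int.sign_eq_one_of_pos h
  have hs2 : (-(t j)).sign = -1 := by rw [Int.sign_neg, hs1]
  rcases dv_U4 (delta σ j) with he|he|he|he <;> rw [he] at h1 h2 ⊢ <;>
    norm_num at h1 h2 <;>
    simp [unitDir, h1, h2, hs1, hs2]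

lemma mkChain (σ : List Turn) (t : ℕ → ℤ) (hpos : ∀ j, j ≤ σ.length → 0 < t j)
    (hnonadj : ∀ a b, a + 1 < b → b ≤ σ.length →
      segSet (cpt σ t a) (cpt σ t (a+1)) ∩ segSet (cpt σ t b) (cpt σ t (b+1)) = ∅) :
    ∃ C : Chain σ, C.pts = cpt σ t := by
  refine ⟨⟨cpt σ t, cpt_zero σ t, ?_, ?_, ?_, ?_, hnonadj⟩, rfl⟩
  · refine ⟨t 0, hpos 0 (Nat.zero_le _), ?_⟩
    have hd : dv (delta σ 0) = (1,0) := by rw [delta_zero]; simp [dv]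
    simp [cpt, Finset.sum_range_one, hd]
  · intro j hj
    have h1 := cpt_succ_fst σ t j
    have h2 := cpt_succ_snd σ t j
    have hp := hpos j hj
    rcases dv_U4 (delta σ j) with he|he|he|he <;> rw [he] at h1 h2 <;>
      norm_num at h1 h2 <;>
      first
        | (left; constructor <;> omega)
        | (right; constructor <;> omega)
  · intro j hj
    rw [unitDir_cpt σ t j (hpos j (le_of_lt hj)),
        unitDir_cpt σ t (j+1) (hpos (j+1) hj)]
    have hd := delta_succ σ j hj
    split
    · next hL =>
        rw [if_pos hL] at hd
        rw [hd, dv_add_one]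
    · next hL =>
        rw [if_neg hL] at hd
        have : delta σ (j+1) = delta σ j - 1 := by omega
        rw [this, dv_sub_one]
  · intro j hj
    have hperp : dotp (dv (delta σ j)) (dv (delta σ (j+1))) = 0 := by
      rcases delta_step σ j hj with h | h
      · rw [h]; exact dotp_dv_perp' _
      · rw [h]; exact dotp_dv_perp_sub _
    exact seg_corner (dv_U4 _) (dv_U4 _) hperp (hpos j (by omega)) (hpos (j+1) hj)
      (cpt_succ_fst σ t j) (cpt_succ_snd σ t j) (cpt_succ_fst σ t (j+1)) (cpt_succ_snd σ t (j+1))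

/-! ### geometric sums and reconstruction -/

lemma dotp_comm (u v : ℤ × ℤ) : dotp u v = dotp v u := by unfold dotp; ring

lemma dotp_dv_perp_sub' (m : ℤ) : dotp (dv (m - 1)) (dv m) = 0 := by
  rw [dotp_comm]; exact dotp_dv_perp_sub m

lemma geo_sum_range (b : ℕ) : ∑ c ∈ Finset.range b, (2:ℤ)^(c+1) = 2^(b+1) - 2 := by
  induction b with
  | zero => simp
  | succ b ih => rw [Finset.sum_range_succ, ih]; ring

lemma geo_Ico (M x : ℕ) : ∀ y, x ≤ y → y ≤ M + 1 →
    ∑ c ∈ Finset.Ico x y, (2:ℤ)^(M - c) ≤ 2^(M + 1 - x) - 2^(M + 1 - y) := by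
  intro y
  induction y with
  | zero =>
    intro h1 _
    have : x = 0 := by omega
    subst this; simp
  | succ y ih =>
    intro h1 h2
    rcases Nat.lt_or_ge y x with h | h
    · -- x = y + 1
      have : x = y + 1 := by omega
      subst this; simp
    · have hIH := ih h (by omega)
      rw [Finset.sum_Ico_succ_top h]
      have he1 : M + 1 - y = (M - y) + 1 := by omega
      have he2 : M + 1 - (y + 1) = M - y := by omega
      rw [he2]
      rw [he1] at hIH
      have : (2:ℤ)^(M - y + 1) = 2 * 2^(M - y) := by ring
      linarith
lemma recon (m : ℤ) (q : ℤ × ℤ) (h : dotp q (dv (m+1)) = 0) :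
    q = (dotp q (dv m) * (dv m).1, dotp q (dv m) * (dv m).2) := by
  rcases emod4 m with hm|hm|hm|hm <;> rcases emod4 (m+1) with h2|h2|h2|h2 <;>
    first
      | (exfalso; omega)
      | (simp [dotp, dv, hm, h2] at h ⊢
         rw [Prod.ext_iff]
         constructor <;> simp <;> omega)

lemma cpt_congr (σ : List Turn) {t t' : ℕ → ℤ} (j : ℕ) (h : ∀ c, c < j → t c = t' c) :
    cpt σ t j = cpt σ t' j := by
  unfold cpt
  rw [Prod.ext_iff]
  refine ⟨?_, ?_⟩ <;>
    · simp only []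
      apply Finset.sum_congr rfl
      intro c hc
      rw [h c (Finset.mem_range.mp hc)]

lemma dotp_cpt_succ (σ : List Turn) (t : ℕ → ℤ) (j : ℕ) (w : ℤ × ℤ) :
    dotp (cpt σ t (j+1)) w = dotp (cpt σ t j) w + t j * dotp (dv (delta σ j)) w := by
  unfold dotp
  rw [cpt_succ_fst, cpt_succ_snd]; ring

set_option maxHeartbeats 2000000 in
lemma reach_of_hook (σ : List Turn) (k : ℕ) (hk : k + 1 < σ.length)
    (heq : σ.get ⟨k, by omega⟩ = σ.get ⟨k + 1, hk⟩) :
    ∃ a : ℤ, 0 < a ∧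
      ((a * (dv (delta σ (k+1))).1, a * (dv (delta σ (k+1))).2) : ℤ × ℤ) ∈ ReachSet σ := by
  set n := σ.length with hn
  set m := delta σ (k+1) with hm
  have hd1 := delta_succ σ k (by omega)
  have hd2 := delta_succ σ (k+1) hk
  rw [(by omega : k + 1 + 1 = k + 2)] at hd2
  rw [heq] at hd1
  obtain ⟨ε, hε, hk0, hk2⟩ :
      ∃ ε : ℤ, (ε = 1 ∨ ε = -1) ∧ delta σ k = m - ε ∧ delta σ (k+2) = m + ε := by
    by_cases hL : σ.get ⟨k+1, hk⟩ = Turn.L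
    · exact ⟨1, Or.inl rfl, by rw [if_pos hL] at hd1; omega, by rw [if_pos hL] at hd2; omega⟩
    · exact ⟨-1, Or.inr rfl, by rw [if_neg hL] at hd1; omega, by rw [if_neg hL] at hd2; omega⟩
  set e := dv m with he
  set f := dv (m + ε) with hf
  have hUe : U4 e := dv_U4 m
  have hUf : U4 f := dv_U4 _
  have hee : dotp e e = 1 := dotp_dv_self m
  have hff : dotp f f = 1 := dotp_dv_self _
  have hef : dotp e f = 0 := by
    rcases hε with rfl|rfl
    · exact dotp_dv_perp' m
    · rw [hf, he, (by ring : m + -1 = m - 1)]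
      exact dotp_dv_perp_sub m
  have hfe : dotp f e = 0 := by rw [dotp_comm]; exact hef
  -- dv (delta σ k) = -f
  have hneg : dv (delta σ k) = (-f.1, -f.2) := by
    have hdt := dv_two (m - 1)
    rw [(by ring : m - 1 + 2 = m + 1)] at hdt
    rcases hε with rfl|rfl
    · rw [hk0]
      rw [hf] at *
      rw [hdt]
      simp
    · rw [hk0, hf, (by ring : m - -1 = m + 1), (by ring : m + -1 = m - 1)]
      exact hdt
  have hkf : dotp (dv (delta σ k)) f = -1 := by
    rw [hneg]
    simp only [dotp] at hff ⊢
    nlinarith [hff]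
  have hke : dotp (dv (delta σ k)) e = 0 := by
    rw [hneg]
    simp only [dotp] at hfe ⊢
    nlinarith [hfe]
  have hk1e : dotp (dv (delta σ (k+1))) e = 1 := by rw [← hm, ← he]; exact hee
  have hk1f : dotp (dv (delta σ (k+1))) f = 0 := by rw [← hm, ← he]; exact hef
  have hk2f : dotp (dv (delta σ (k+2))) f = 1 := by rw [hk2, ← hf]; exact hff
  have hk2e : dotp (dv (delta σ (k+2))) e = 0 := by rw [hk2, ← hf]; exact hfe
  -- parameters
  have hk2n : k + 2 ≤ n := by omega
  set P := cpt σ (fun c => 2^(c+1)) k with hP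
  set S := ∑ c ∈ Finset.Ico (k+3) (n+1), (2:ℤ)^(n+2-c) * dotp (dv (delta σ c)) f with hS
  set c0 : ℤ := - dotp P f - S with hc0
  set H : ℤ := 2^(n+5) with hH
  set t : ℕ → ℤ := fun j =>
    if j < k then 2^(j+1)
    else if j = k then H
    else if j = k+1 then H
    else if j = k+2 then H + c0
    else 2^(n+2-j) with ht
  have htpre : ∀ c, c < k → t c = 2^(c+1) := by
    intro c hc; simp only [ht]; rw [if_pos hc]
  have htk : t k = H := by
    simp only [ht]; rw [if_neg (by omega)]; simp
  have htk1 : t (k+1) = H := by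
    simp only [ht]; rw [if_neg (by omega), if_neg (by omega)]; simp
  have htk2 : t (k+2) = H + c0 := by
    simp only [ht]; rw [if_neg (by omega), if_neg (by omega), if_neg (by omega)]; simp
  have htsuf : ∀ c, k+3 ≤ c → t c = 2^(n+2-c) := by
    intro c hc
    simp only [ht]
    rw [if_neg (by omega), if_neg (by omega), if_neg (by omega), if_neg (by omega)]
  -- bounds
  have hpow_k : (2:ℤ)^(k+1) ≤ 2^n := pow_le_pow_right₀ (by norm_num) (by omega)
  have hpow_H : (2:ℤ)^(n+5) = 32 * 2^n := by ring
  have hpow_pos : (0:ℤ) < 2^n := by positivity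
  have hPb : ∀ w : ℤ × ℤ, U4 w → |dotp P w| ≤ 2^(k+1) := by
    intro w hw
    rw [hP, dotp_cpt]
    have hb := sum_dotp_bound σ (fun c => 2^(c+1)) hw (Finset.range k)
      (fun c _ => by positivity)
    have := geo_sum_range k
    calc |∑ c ∈ Finset.range k, (2:ℤ)^(c+1) * dotp (dv (delta σ c)) w|
        ≤ ∑ c ∈ Finset.range k, (2:ℤ)^(c+1) := hb
      _ ≤ 2^(k+1) := by omega
  have hSb : |S| ≤ 2^n := by
    rw [hS]
    have hb := sum_dotp_bound σ (fun c => 2^(n+2-c)) hUf (Finset.Ico (k+3) (n+1))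
      (fun c _ => by positivity)
    have hg := geo_Ico (n+2) (k+3) (n+1) (by omega) (by omega)
    have h1 : (2:ℤ)^(n+2+1-(k+3)) ≤ 2^n := pow_le_pow_right₀ (by norm_num) (by omega)
    have h2 : (0:ℤ) < 2^(n+2+1-(n+1)) := by positivity
    calc |∑ c ∈ Finset.Ico (k+3) (n+1), (2:ℤ)^(n+2-c) * dotp (dv (delta σ c)) f|
        ≤ ∑ c ∈ Finset.Ico (k+3) (n+1), (2:ℤ)^(n+2-c) := hb
      _ ≤ 2^n := by linarith
  have hc0b : |c0| ≤ 2^n + 2^n := by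
    rw [hc0]
    have h1 := hPb f hUf
    have h2 := hSb
    have := abs_le.mp h1
    have := abs_le.mp h2
    rw [abs_le]
    constructor <;> linarith
  have htpos : ∀ j : ℕ, 0 < t j := by
    intro j
    have hc := abs_le.mp hc0b
    simp only [ht]
    split_ifs <;> first | positivity | (rw [hH, hpow_H]; linarith)
  -- prefix endpoint
  have hpk : cpt σ t k = P := by
    rw [hP]; exact cpt_congr σ k htpre
  have hA1f : dotp (cpt σ t (k+1)) f = dotp P f - H := by
    rw [dotp_cpt_succ, hpk, htk, hkf]; ring
  have hA1e : dotp (cpt σ t (k+1)) e = dotp P e := by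
    rw [dotp_cpt_succ, hpk, htk, hke]; ring
  have hA2f : dotp (cpt σ t (k+2)) f = dotp P f - H := by
    have h := dotp_cpt_succ σ t (k+1) f
    rw [(by omega : k+1+1 = k+2)] at h
    rw [h, hA1f, htk1, hk1f]; ring
  have hA2e : dotp (cpt σ t (k+2)) e = dotp P e + H := by
    have h := dotp_cpt_succ σ t (k+1) e
    rw [(by omega : k+1+1 = k+2)] at h
    rw [h, hA1e, htk1, hk1e]; ring
  have hA3f : dotp (cpt σ t (k+3)) f = dotp P f + c0 := by
    have h := dotp_cpt_succ σ t (k+2) f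
    rw [(by omega : k+2+1 = k+3)] at h
    rw [h, hA2f, htk2, hk2f]; ring
  have hA3e : dotp (cpt σ t (k+3)) e = dotp P e + H := by
    have h := dotp_cpt_succ σ t (k+2) e
    rw [(by omega : k+2+1 = k+3)] at h
    rw [h, hA2e, htk2, hk2e]; ring
  -- deviation bounds
  have hdev_pre : ∀ w : ℤ × ℤ, U4 w → ∀ j j' : ℕ, j ≤ j' → j' ≤ k →
      |dotp (cpt σ t j) w - dotp (cpt σ t j') w| ≤ 2^(j'+1) - 2 := by
    intro w hw j j' hj hj'
    have hd := dotp_cpt_diff σ t w hj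
    have hb := sum_dotp_bound σ t hw (Finset.Ico j j') (fun c hc => by
      rw [htpre c (by have := Finset.mem_Ico.mp hc; omega)]; positivity)
    have hsum : ∑ c ∈ Finset.Ico j j', t c ≤ 2^(j'+1) - 2 := by
      have h1 : ∑ c ∈ Finset.Ico j j', t c = ∑ c ∈ Finset.Ico j j', (2:ℤ)^(c+1) :=
        Finset.sum_congr rfl (fun c hc => htpre c (by have := Finset.mem_Ico.mp hc; omega))
      have h2 : ∑ c ∈ Finset.Ico j j', (2:ℤ)^(c+1) ≤ ∑ c ∈ Finset.range j', (2:ℤ)^(c+1) := by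
        apply Finset.sum_le_sum_of_subset_of_nonneg
        · intro x hx
          have := Finset.mem_Ico.mp hx
          simp only [Finset.mem_range]
          omega
        · intro c _ _; positivity
      rw [h1]
      rw [geo_sum_range j'] at h2
      exact h2
    rw [abs_sub_comm]
    have h3 : dotp (cpt σ t j') w - dotp (cpt σ t j) w
        = ∑ c ∈ Finset.Ico j j', t c * dotp (dv (delta σ c)) w := by
      rw [hd]; ring
    rw [h3]
    exact le_trans hb hsum
  have hdev_suf : ∀ w : ℤ × ℤ, U4 w → ∀ x j : ℕ, k+3 ≤ x → x ≤ j → j ≤ n+1 →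
      |dotp (cpt σ t j) w - dotp (cpt σ t x) w| ≤ 2^(n+3-x) - 4 := by
    intro w hw x j hx hxj hj
    have hd := dotp_cpt_diff σ t w hxj
    have hb := sum_dotp_bound σ t hw (Finset.Ico x j) (fun c hc => le_of_lt (htpos c))
    have hsum : ∑ c ∈ Finset.Ico x j, t c ≤ 2^(n+3-x) - 4 := by
      have h1 : ∑ c ∈ Finset.Ico x j, t c = ∑ c ∈ Finset.Ico x j, (2:ℤ)^(n+2-c) :=
        Finset.sum_congr rfl (fun c hc => htsuf c (by have := Finset.mem_Ico.mp hc; omega))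
      have h2 : ∑ c ∈ Finset.Ico x j, (2:ℤ)^(n+2-c) ≤ ∑ c ∈ Finset.Ico x (n+1), (2:ℤ)^(n+2-c) := by
        apply Finset.sum_le_sum_of_subset_of_nonneg
        · intro y hy
          have := Finset.mem_Ico.mp hy
          simp only [Finset.mem_Ico]
          omega
        · intro c _ _; positivity
      have h3 := geo_Ico (n+2) x (n+1) (by omega) (by omega)
      have he1 : n+2+1-x = n+3-x := by omega
      have he2 : n+2+1-(n+1) = 2 := by omega
      rw [he1, he2] at h3
      have h4 : (2:ℤ)^2 = 4 := by norm_num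
      rw [h1]
      linarith
    have h3 : dotp (cpt σ t j) w - dotp (cpt σ t x) w
        = ∑ c ∈ Finset.Ico x j, t c * dotp (dv (delta σ c)) w := by
      rw [hd]; ring
    rw [h3]
    exact le_trans hb hsum
  have hH32 : H = 32 * 2^n := by rw [hH]; ring
  -- upper bound for all points up to k+1 in direction e
  have hup : ∀ j, j ≤ k+1 → dotp (cpt σ t j) e ≤ dotp P e + 2^(k+1) := by
    intro j hj
    have h2p : (0:ℤ) < 2^(k+1) := by positivity
    rcases Nat.lt_or_ge j (k+1) with h | h
    · have hd := abs_le.mp (hdev_pre e hUe j k (by omega) (le_refl k))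
      rw [hpk] at hd
      linarith [hd.1, hd.2]
    · have : j = k+1 := by omega
      rw [this, hA1e]
      linarith
  -- the nonadjacent disjointness
  have hnonadj : ∀ a b, a + 1 < b → b ≤ n →
      segSet (cpt σ t a) (cpt σ t (a+1)) ∩ segSet (cpt σ t b) (cpt σ t (b+1)) = ∅ := by
    intro a b hab hbn
    rcases Nat.lt_or_ge b (k+1) with hb1 | hb1
    · -- Case 1 : b ≤ k
      have hb0 : 1 ≤ b := by omega
      set w := dv (delta σ (b-1)) with hw
      have hUw : U4 w := dv_U4 _
      have hb' : b - 1 + 1 = b := by omega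
      have hperpb : dotp (dv (delta σ b)) w = 0 := by
        have hbs := delta_step σ (b-1) (by omega)
        rw [hb'] at hbs
        rcases hbs with h | h
        · rw [h, hw]; exact dotp_dv_perp _
        · rw [h, hw]; exact dotp_dv_perp_sub' _
      have hDb : dotp (cpt σ t b) w = dotp (cpt σ t (b-1)) w + 2^b := by
        have h := dotp_cpt_succ σ t (b-1) w
        rw [hb'] at h
        rw [h, htpre (b-1) (by omega), hb', hw, dotp_dv_self]
        ring
      have hDb1 : dotp (cpt σ t (b+1)) w = dotp (cpt σ t b) w := by
        rw [dotp_cpt_succ, hperpb]; ring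
      have hea := abs_le.mp (hdev_pre w hUw a (b-1) (by omega) (by omega))
      have hea1 := abs_le.mp (hdev_pre w hUw (a+1) (b-1) (by omega) (by omega))
      rw [hb'] at hea hea1
      have h2b : (0:ℤ) < 2^b := by positivity
      apply seg_disj hUw
      apply max_lt <;> apply lt_min <;> linarith [hea.1, hea.2, hea1.1, hea1.2]
    rcases Nat.eq_or_lt_of_le hb1 with hb2 | hb2
    · -- Case 2 : b = k+1
      have hbe : b = k + 1 := hb2.symm
      subst hbe
      rw [(by omega : k+1+1 = k+2)]
      have h1 := abs_le.mp (hdev_pre f hUf a k (by omega) (le_refl k))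
      have h2 := abs_le.mp (hdev_pre f hUf (a+1) k (by omega) (le_refl k))
      rw [hpk] at h1 h2
      have h2p : (0:ℤ) < 2^(k+1) := by positivity
      apply seg_disj' hUf
      rw [hA1f, hA2f]
      apply max_lt <;> apply lt_min <;> linarith [hpow_k, hpow_pos, h1.1, h2.1]
    rcases Nat.lt_or_ge b (k+3) with hb3 | hb3
    · -- Case 3 : b = k+2, a ≤ k
      have hbe : b = k + 2 := by omega
      subst hbe
      rw [(by omega : k+2+1 = k+3)]
      apply seg_disj hUe
      rw [hA2e, hA3e]
      have h1 := hup a (by omega)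
      have h2 := hup (a+1) (by omega)
      apply max_lt <;> apply lt_min <;> linarith [hpow_k, hpow_pos]
    -- now b ≥ k+3
    rcases Nat.lt_or_ge a (k+1) with ha1 | ha1
    · -- Case 4 : a ≤ k
      have hlow : ∀ j, k+3 ≤ j → j ≤ n+1 → dotp P e + H - 2^n ≤ dotp (cpt σ t j) e := by
        intro j hj1 hj2
        have hd := abs_le.mp (hdev_suf e hUe (k+3) j (le_refl _) hj1 hj2)
        rw [hA3e] at hd
        have hb : (2:ℤ)^(n+3-(k+3)) ≤ 2^n := pow_le_pow_right₀ (by norm_num) (by omega)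
        linarith [hd.1]
      have h1 := hup a (by omega)
      have h2 := hup (a+1) (by omega)
      have h3 := hlow b (by omega) (by omega)
      have h4 := hlow (b+1) (by omega) (by omega)
      apply seg_disj hUe
      apply max_lt <;> apply lt_min <;> linarith [hpow_k, hpow_pos]
    rcases Nat.eq_or_lt_of_le ha1 with ha2 | ha2
    · -- Case 5 : a = k+1
      have hae : a = k + 1 := ha2.symm
      subst hae
      rw [(by omega : k+1+1 = k+2)]
      have hlowf : ∀ j, k+3 ≤ j → j ≤ n+1 → dotp P f + c0 - 2^n ≤ dotp (cpt σ t j) f := by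
        intro j hj1 hj2
        have hd := abs_le.mp (hdev_suf f hUf (k+3) j (le_refl _) hj1 hj2)
        rw [hA3f] at hd
        have hb : (2:ℤ)^(n+3-(k+3)) ≤ 2^n := pow_le_pow_right₀ (by norm_num) (by omega)
        linarith [hd.1]
      have h3 := hlowf b (by omega) (by omega)
      have h4 := hlowf (b+1) (by omega) (by omega)
      have hc := abs_le.mp hc0b
      apply seg_disj hUf
      rw [hA1f, hA2f]
      apply max_lt <;> apply lt_min <;> linarith [hpow_k, hpow_pos]
    · -- Case 6/7 : a ≥ k+2
      have ha3 : k + 2 ≤ a := by omega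
      set w := dv (delta σ (a+1)) with hw
      have hUw : U4 w := dv_U4 _
      have hperpa : dotp (dv (delta σ a)) w = 0 := by
        have has := delta_step σ a (by omega)
        rcases has with h | h
        · rw [hw, h]; exact dotp_dv_perp' _
        · rw [hw, h]; exact dotp_dv_perp_sub _
      have hDa : dotp (cpt σ t (a+1)) w = dotp (cpt σ t a) w := by
        rw [dotp_cpt_succ, hperpa]; ring
      have hDa2 : dotp (cpt σ t (a+2)) w = dotp (cpt σ t (a+1)) w + 2^(n+1-a) := by
        have h := dotp_cpt_succ σ t (a+1) w
        rw [(by omega : a+1+1 = a+2)] at h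
        rw [h, htsuf (a+1) (by omega), (by omega : n+2-(a+1) = n+1-a), hw, dotp_dv_self]
        ring
      have hlowb : ∀ j, a+2 ≤ j → j ≤ n+1 → dotp (cpt σ t (a+1)) w + 4 ≤ dotp (cpt σ t j) w := by
        intro j h1 h2
        have hd := abs_le.mp (hdev_suf w hUw (a+2) j (by omega) h1 h2)
        rw [hDa2] at hd
        have he : n+3-(a+2) = n+1-a := by omega
        rw [he] at hd
        linarith [hd.1]
      have h3 := hlowb b (by omega) (by omega)
      have h4 := hlowb (b+1) (by omega) (by omega)
      apply seg_disj hUw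
      apply max_lt <;> apply lt_min <;> linarith [hDa]
  -- assemble the chain
  obtain ⟨C, hC⟩ := mkChain σ t (fun j _ => htpos j) hnonadj
  -- endpoint dot products
  have hEf : dotp (cpt σ t (n+1)) f = 0 := by
    have hd := dotp_cpt_diff σ t f (show (k+3:ℕ) ≤ n+1 by omega)
    have hsum : ∑ c ∈ Finset.Ico (k+3) (n+1), t c * dotp (dv (delta σ c)) f = S := by
      rw [hS]
      apply Finset.sum_congr rfl
      intro c hc
      rw [htsuf c (Finset.mem_Ico.mp hc).1]
    rw [hsum, hA3f] at hd
    rw [hd, hc0]; ring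
  have hEe : 0 < dotp (cpt σ t (n+1)) e := by
    have hd := abs_le.mp (hdev_suf e hUe (k+3) (n+1) (le_refl _) (by omega) (le_refl _))
    rw [hA3e] at hd
    have h1 := abs_le.mp (hPb e hUe)
    have hb : (2:ℤ)^(n+3-(k+3)) ≤ 2^n := pow_le_pow_right₀ (by norm_num) (by omega)
    linarith [hd.1, h1.1, hpow_k, hpow_pos]
  -- reconstruction of the endpoint
  have hrec : cpt σ t (n+1)
      = (dotp (cpt σ t (n+1)) e * e.1, dotp (cpt σ t (n+1)) e * e.2) := by
    rw [he]
    apply recon m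
    rcases hε with rfl|rfl
    · exact hEf
    · have hdt := dv_two (m-1)
      rw [(by ring : m-1+2 = m+1)] at hdt
      rw [hdt]
      rw [hf, (by ring : m + -1 = m - 1)] at hEf
      simp only [dotp] at hEf ⊢
      nlinarith [hEf]
  refine ⟨dotp (cpt σ t (n+1)) e, hEe, ?_⟩
  show ∃ C : Chain σ, C.pts (σ.length + 1) = _
  refine ⟨C, ?_⟩
  rw [hC, ← hn]
  exact hrec

/-- Any turn sequence with `|l - r| ≥ 5` contains all four types of hooks, and
consequently `A(σ)` contains a point on each of the four signed axes. -/
theorem large_excess_all_hooks (σ : List Turn) (h : 5 ≤ |excess σ|) :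
    HasHook σ 1 ∧ HasHook σ 3 ∧ HasHook σ 0 ∧ HasHook σ 2 ∧
    (∃ a : ℤ, 0 < a ∧ (a, (0 : ℤ)) ∈ ReachSet σ) ∧
    (∃ a : ℤ, a < 0 ∧ (a, (0 : ℤ)) ∈ ReachSet σ) ∧
    (∃ b : ℤ, 0 < b ∧ ((0 : ℤ), b) ∈ ReachSet σ) ∧
    (∃ b : ℤ, b < 0 ∧ ((0 : ℤ), b) ∈ ReachSet σ) := by
  have hcase : 5 ≤ excess σ ∨ excess σ ≤ -5 := by
    rcases abs_cases (excess σ) with ⟨h1,_⟩|⟨h1,_⟩ <;> omega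
  have key : ∀ d : ℤ, 0 ≤ d → d < 4 → HasHook σ d := by
    intro d hd0 hd4
    rcases hcase with h5 | h5
    · by_cases hd : d = 0
      · obtain ⟨k, hlt, heq, hv⟩ := hook_exists_pos σ 4 (by norm_num) (by omega)
        exact ⟨k, hlt, heq, by subst hd; omega⟩
      · obtain ⟨k, hlt, heq, hv⟩ := hook_exists_pos σ d (by omega) (by omega)
        exact ⟨k, hlt, heq, by omega⟩
    · obtain ⟨k, hlt, heq, hv⟩ := hook_exists_neg σ (d-4) (by omega) (by omega)
      exact ⟨k, hlt, heq, by omega⟩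
  have hh0 := key 0 (by norm_num) (by norm_num)
  have hh1 := key 1 (by norm_num) (by norm_num)
  have hh2 := key 2 (by norm_num) (by norm_num)
  have hh3 := key 3 (by norm_num) (by norm_num)
  refine ⟨hh1, hh3, hh0, hh2, ?_, ?_, ?_, ?_⟩
  · obtain ⟨k, hlt, heq, hd⟩ := hh0
    obtain ⟨a, ha, hmem⟩ := reach_of_hook σ k hlt heq
    have hdv : dv (delta σ (k+1)) = ((1:ℤ),(0:ℤ)) := by simp [dv, hd]
    rw [hdv] at hmem
    refine ⟨a, ha, ?_⟩
    simpa using hmem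
  · obtain ⟨k, hlt, heq, hd⟩ := hh2
    obtain ⟨a, ha, hmem⟩ := reach_of_hook σ k hlt heq
    have hdv : dv (delta σ (k+1)) = ((-1:ℤ),(0:ℤ)) := by simp [dv, hd]
    rw [hdv] at hmem
    refine ⟨-a, by omega, ?_⟩
    simpa using hmem
  · obtain ⟨k, hlt, heq, hd⟩ := hh1
    obtain ⟨a, ha, hmem⟩ := reach_of_hook σ k hlt heq
    have hdv : dv (delta σ (k+1)) = ((0:ℤ),(1:ℤ)) := by simp [dv, hd]
    rw [hdv] at hmem
    refine ⟨a, ha, ?_⟩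
    simpa using hmem
  · obtain ⟨k, hlt, heq, hd⟩ := hh3
    obtain ⟨a, ha, hmem⟩ := reach_of_hook σ k hlt heq
    have hdv : dv (delta σ (k+1)) = ((0:ℤ),(-1:ℤ)) := by simp [dv, hd]
    rw [hdv] at hmem
    refine ⟨-a, by omega, ?_⟩
    simpa using hmem
end
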